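/- The quantum indel distance d(ρ₁, ρ₂) := min{ s + t : D^s(ρ₁) ∩ D^t(ρ₂) ≠ ∅ } is a metric on the set of all finite-qudit density matrices: it is nonnegative, zero iff ρ₁ = ρ₂, symmetric, and satisfies the triangle inequality d(ρ₁, ρ₃) ≤ d(ρ₁, ρ₂) + d(ρ₂, ρ₃). -/

import Mathlib

open Matrix
open scoped ComplexOrder

/-- Matrices on `n` qudits of level `l`. -/
abbrev QMat (l n : ℕ) := Matrix (Fin n → Fin l) (Fin n → Fin l) ℂ

/-- A quantum state on some finite number of qudits. -/
def QState (l : ℕ) := Σ n : ℕ, QMat l n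

/-- Density matrix: positive semidefinite with trace 1. -/
def IsDensity {l n : ℕ} (ρ : QMat l n) : Prop := ρ.PosSemidef ∧ ρ.trace = 1

def IsDensityS {l : ℕ} (ρ : QState l) : Prop := ρ.2.PosSemidef ∧ ρ.2.trace = 1

/-- Partial trace over the qudit at position `p`. -/
noncomputable def traceOut {l n : ℕ} (p : Fin (n + 1)) (ρ : QMat l (n + 1)) : QMat l n :=
  fun x y => ∑ z : Fin l, ρ (p.insertNth z x) (p.insertNth z y)

/-- Single deletion: all states obtained by tracing out one qudit. -/
def del1 {l : ℕ} : QState l → Set (QState l)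
  | ⟨0, _⟩ => ∅
  | ⟨n + 1, ρ⟩ => { σ | ∃ p : Fin (n + 1), σ = ⟨n, traceOut p ρ⟩ }

/-- Single insertion sphere: density matrices having `ρ` among their single deletions. -/
def ins1 {l : ℕ} (ρ : QState l) : Set (QState l) :=
  { σ | IsDensityS σ ∧ ρ ∈ del1 σ }

def delSet {l : ℕ} (X : Set (QState l)) : Set (QState l) := ⋃ ρ ∈ X, del1 ρ
def insSet {l : ℕ} (X : Set (QState l)) : Set (QState l) := ⋃ ρ ∈ X, ins1 ρ

/-- `s`-deletion errors. -/
def Dq {l : ℕ} : ℕ → Set (QState l) → Set (QState l)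
  | 0, X => X
  | s + 1, X => delSet (Dq s X)

/-- `t`-insertion errors. -/
def Iq {l : ℕ} : ℕ → Set (QState l) → Set (QState l)
  | 0, X => X
  | t + 1, X => insSet (Iq t X)

/-- Quantum indel distance. -/
noncomputable def qdist {l : ℕ} (ρ₁ ρ₂ : QState l) : ℕ :=
  sInf { k | ∃ s t : ℕ, s + t = k ∧ (Dq s {ρ₁} ∩ Dq t {ρ₂}).Nonempty }


section Aux

open Set

lemma succAbove_comp_comm {n : ℕ} {p q : Fin (n + 2)} {p' q' : Fin (n + 1)}
    (h1 : p.succAbove p' = q) (h2 : q.succAbove q' = p) :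
    p.succAbove ∘ p'.succAbove = q.succAbove ∘ q'.succAbove := by
  have hm1 : StrictMono (p.succAbove ∘ p'.succAbove) :=
    (Fin.strictMono_succAbove p).comp (Fin.strictMono_succAbove p')
  have hm2 : StrictMono (q.succAbove ∘ q'.succAbove) :=
    (Fin.strictMono_succAbove q).comp (Fin.strictMono_succAbove q')
  refine (StrictMono.range_inj hm1 hm2).mp ?_
  have key : ∀ (a b : Fin (n + 2)) (a' : Fin (n + 1)), a.succAbove a' = b →
      range (a.succAbove ∘ a'.succAbove) = ({a, b} : Set (Fin (n + 2)))ᶜ := by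
    intro a b a' hab
    rw [range_comp, Fin.range_succAbove, ← hab]
    ext x
    simp only [mem_image, mem_compl_iff, mem_insert_iff, mem_singleton_iff, not_or]
    constructor
    · rintro ⟨y, hy, rfl⟩
      exact ⟨(Fin.succAbove_ne a y).symm.symm,
        fun h => hy (by simpa using Fin.succAbove_right_injective (p := a) h)⟩
    · rintro ⟨hxa, hxb⟩
      obtain ⟨y, hy⟩ := Fin.exists_succAbove_eq (Ne.symm (Ne.symm hxa))
      exact ⟨y, by rintro rfl; exact hxb hy.symm, hy⟩
  rw [key p q p' h1, key q p q' h2, Set.pair_comm]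

lemma insertNth_comm {α : Type*} {n : ℕ} {p q : Fin (n + 2)} (hpq : p ≠ q) :
    ∃ p' q' : Fin (n + 1), ∀ (z z' : α) (x : Fin n → α),
      p.insertNth z (p'.insertNth z' x) =
        (q.insertNth z' (q'.insertNth z x) : Fin (n + 2) → α) := by
  obtain ⟨p', hp'⟩ := Fin.exists_succAbove_eq hpq.symm
  obtain ⟨q', hq'⟩ := Fin.exists_succAbove_eq hpq
  have hcomp := succAbove_comp_comm hp' hq'
  refine ⟨p', q', fun z z' x => ?_⟩
  rw [Fin.insertNth_eq_iff]
  constructor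
  · rw [← hq', Fin.insertNth_apply_succAbove, Fin.insertNth_apply_same]
  · rw [Fin.insertNth_eq_iff]
    constructor
    · simp only [Fin.removeNth]
      rw [hp', Fin.insertNth_apply_same]
    · funext k
      simp only [Fin.removeNth]
      have := congrFun hcomp k
      simp only [Function.comp_apply] at this
      rw [this, Fin.insertNth_apply_succAbove, Fin.insertNth_apply_succAbove]

lemma mem_del1 {l n : ℕ} {ρ : QMat l (n + 1)} {σ : QState l} :
    σ ∈ del1 (⟨n + 1, ρ⟩ : QState l) ↔ ∃ p : Fin (n + 1), σ = ⟨n, traceOut p ρ⟩ :=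
  Iff.rfl

lemma delSet_singleton {l : ℕ} (ρ : QState l) : delSet {ρ} = del1 ρ := by
  simp [delSet]

lemma mem_delSet {l : ℕ} {X : Set (QState l)} {σ : QState l} :
    σ ∈ delSet X ↔ ∃ ρ ∈ X, σ ∈ del1 ρ := by
  simp [delSet]

lemma Dq_one {l : ℕ} (X : Set (QState l)) : Dq 1 X = delSet X := rfl

lemma mem_Dq_trans {l : ℕ} {X : Set (QState l)} {σ : QState l} :
    ∀ (a : ℕ) {b : ℕ} {μ : QState l}, σ ∈ Dq b X → μ ∈ Dq a {σ} → μ ∈ Dq (a + b) X := by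
  intro a
  induction a with
  | zero =>
    intro b μ hσ hμ
    simp only [Dq, Set.mem_singleton_iff] at hμ
    rw [zero_add, hμ]
    exact hσ
  | succ a ih =>
    intro b μ hσ hμ
    obtain ⟨ν, hν, hμν⟩ := mem_delSet.mp hμ
    have : μ ∈ delSet (Dq (a + b) X) := mem_delSet.mpr ⟨ν, ih hσ hν, hμν⟩
    have h : a + 1 + b = (a + b) + 1 := by omega
    rw [h]
    exact this

lemma Dq_succ_eq {l : ℕ} : ∀ (s : ℕ) (X : Set (QState l)),
    Dq (s + 1) X = Dq s (delSet X) := by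
  intro s
  induction s with
  | zero => intro X; rfl
  | succ s ih =>
    intro X
    show delSet (Dq (s + 1) X) = delSet (Dq s (delSet X))
    rw [ih]

lemma mem_Dq_exists {l : ℕ} : ∀ (s : ℕ) {X : Set (QState l)} {σ : QState l},
    σ ∈ Dq s X → ∃ x ∈ X, σ ∈ Dq s {x} := by
  intro s
  induction s with
  | zero => intro X σ h; exact ⟨σ, h, rfl⟩
  | succ s ih =>
    intro X σ h
    obtain ⟨ν, hν, hσν⟩ := mem_delSet.mp h
    obtain ⟨x, hx, hνx⟩ := ih hν
    exact ⟨x, hx, mem_delSet.mpr ⟨ν, hνx, hσν⟩⟩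

lemma trace_traceOut {l n : ℕ} (p : Fin (n + 1)) (ρ : QMat l (n + 1)) :
    (traceOut p ρ).trace = ρ.trace := by
  classical
  calc (traceOut p ρ).trace
      = ∑ z : Fin l, ∑ x : Fin n → Fin l,
          ρ (p.insertNth z x) (p.insertNth z x) := by
        rw [Matrix.trace]
        simp only [Matrix.diag, traceOut]
        rw [Finset.sum_comm]
    _ = ∑ zx : Fin l × (Fin n → Fin l),
          ρ (p.insertNth zx.1 zx.2) (p.insertNth zx.1 zx.2) :=
        (Fintype.sum_prod_type
          (f := fun zx : Fin l × (Fin n → Fin l) =>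
            ρ (p.insertNth zx.1 zx.2) (p.insertNth zx.1 zx.2))).symm
    _ = ρ.trace := by
        rw [Matrix.trace]
        exact Fintype.sum_equiv (Fin.insertNthEquiv (fun _ => Fin l) p)
          (fun zx => ρ (p.insertNth zx.1 zx.2) (p.insertNth zx.1 zx.2))
          (fun w => Matrix.diag ρ w)
          (fun zx => rfl)

lemma zero_mem_Dq {l : ℕ} : ∀ (n : ℕ) (ρ : QMat l n),
    (⟨0, fun _ _ => ρ.trace⟩ : QState l) ∈ Dq n {(⟨n, ρ⟩ : QState l)} := by
  intro n
  induction n with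
  | zero =>
    intro ρ
    have hρ : ρ = fun _ _ => ρ.trace := by
      funext x y
      rw [Subsingleton.elim x (default : Fin 0 → Fin l),
        Subsingleton.elim y (default : Fin 0 → Fin l)]
      rw [Matrix.trace]
      rw [Fintype.sum_unique]
      rfl
    show (⟨0, fun _ _ => ρ.trace⟩ : QState l) ∈ ({⟨0, ρ⟩} : Set (QState l))
    refine Set.mem_singleton_iff.mpr ?_
    exact congrArg _ hρ.symm
  | succ n ih =>
    intro ρ
    have h1 : (⟨n, traceOut 0 ρ⟩ : QState l) ∈ Dq 1 {(⟨n + 1, ρ⟩ : QState l)} := by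
      rw [Dq_one]
      exact mem_delSet.mpr ⟨⟨n + 1, ρ⟩, Set.mem_singleton _, 0, rfl⟩
    have h2 := ih (traceOut 0 ρ)
    rw [trace_traceOut] at h2
    exact mem_Dq_trans n h1 h2

lemma diamond {l : ℕ} {ρ σ τ : QState l} (hσ : σ ∈ del1 ρ) (hτ : τ ∈ del1 ρ) :
    σ = τ ∨ ∃ μ, μ ∈ del1 σ ∧ μ ∈ del1 τ := by
  obtain ⟨n, ρ⟩ := ρ
  match n with
  | 0 => exact absurd hσ (by simp [del1])
  | 1 =>
    obtain ⟨p, rfl⟩ := hσ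
    obtain ⟨q, rfl⟩ := hτ
    left
    have hpq : p = q := Subsingleton.elim (α := Fin 1) p q
    rw [hpq]
  | (m + 2) =>
    obtain ⟨p, rfl⟩ := hσ
    obtain ⟨q, rfl⟩ := hτ
    by_cases hpq : p = q
    · left; rw [hpq]
    · right
      obtain ⟨p', q', hcomm⟩ := insertNth_comm (α := Fin l) hpq
      have heq : traceOut p' (traceOut p ρ) = traceOut q' (traceOut q ρ) := by
        funext x y
        simp only [traceOut]
        rw [Finset.sum_comm]
        congr 1
        funext z
        congr 1
        funext z'
        rw [hcomm z z' x, hcomm z z' y]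
      exact ⟨⟨m, traceOut p' (traceOut p ρ)⟩, ⟨p', rfl⟩, ⟨q', by rw [heq]⟩⟩

lemma strip {l : ℕ} {ρ σ : QState l} (hσ : σ ∈ del1 ρ) :
    ∀ (t : ℕ) (τ : QState l), τ ∈ Dq t {ρ} →
    ∃ μ t' s', t' ≤ t ∧ s' ≤ 1 ∧ μ ∈ Dq t' {σ} ∧ μ ∈ Dq s' {τ} := by
  intro t
  induction t with
  | zero =>
    intro τ hτ
    simp only [Dq, Set.mem_singleton_iff] at hτ
    subst hτ
    refine ⟨σ, 0, 1, le_rfl, le_rfl, rfl, ?_⟩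
    rw [Dq_one, delSet_singleton]
    exact hσ
  | succ t ih =>
    intro τ hτ
    obtain ⟨τ₁, hτ₁, hττ₁⟩ := mem_delSet.mp hτ
    obtain ⟨μ₁, t', s', ht', hs', hμσ, hμτ₁⟩ := ih τ₁ hτ₁
    match s', hs' with
    | 0, _ =>
      simp only [Dq, Set.mem_singleton_iff] at hμτ₁
      subst hμτ₁
      refine ⟨τ, t' + 1, 0, by omega, by omega, ?_, rfl⟩
      exact mem_delSet.mpr ⟨μ₁, hμσ, hττ₁⟩
    | 1, _ =>
      rw [Dq_one, delSet_singleton] at hμτ₁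
      rcases diamond hμτ₁ hττ₁ with heq | ⟨ν, hν₁, hν₂⟩
      · subst heq
        exact ⟨μ₁, t', 0, by omega, by omega, hμσ, rfl⟩
      · refine ⟨ν, t' + 1, 1, by omega, le_rfl, ?_, ?_⟩
        · exact mem_delSet.mpr ⟨μ₁, hμσ, hν₁⟩
        · rw [Dq_one, delSet_singleton]; exact hν₂

lemma confluence {l : ℕ} : ∀ (s : ℕ) {ρ σ : QState l}, σ ∈ Dq s {ρ} →
    ∀ (t : ℕ) (τ : QState l), τ ∈ Dq t {ρ} →
    ∃ μ t' s', t' ≤ t ∧ s' ≤ s ∧ μ ∈ Dq t' {σ} ∧ μ ∈ Dq s' {τ} := by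
  intro s
  induction s with
  | zero =>
    intro ρ σ hσ t τ hτ
    simp only [Dq, Set.mem_singleton_iff] at hσ
    subst hσ
    exact ⟨τ, t, 0, le_rfl, le_rfl, hτ, rfl⟩
  | succ s ih =>
    intro ρ σ hσ t τ hτ
    rw [Dq_succ_eq, delSet_singleton] at hσ
    obtain ⟨σ₁, hσ₁, hσσ₁⟩ := mem_Dq_exists s hσ
    obtain ⟨μ₁, t₁, e, ht₁, he, hμ₁σ₁, hμ₁τ⟩ := strip hσ₁ t τ hτ
    obtain ⟨μ, t₂, s₂, ht₂, hs₂, hμσ, hμμ₁⟩ := ih hσσ₁ t₁ μ₁ hμ₁σ₁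
    refine ⟨μ, t₂, s₂ + e, by omega, by omega, hμσ, mem_Dq_trans s₂ hμ₁τ hμμ₁⟩

lemma qdist_set_nonempty {l : ℕ} {ρ₁ ρ₂ : QState l}
    (h₁ : IsDensityS ρ₁) (h₂ : IsDensityS ρ₂) :
    { k | ∃ s t : ℕ, s + t = k ∧ (Dq s {ρ₁} ∩ Dq t {ρ₂}).Nonempty }.Nonempty := by
  obtain ⟨n₁, M₁⟩ := ρ₁
  obtain ⟨n₂, M₂⟩ := ρ₂
  refine ⟨n₁ + n₂, n₁, n₂, rfl, ⟨⟨0, fun _ _ => 1⟩, ?_, ?_⟩⟩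
  · have := zero_mem_Dq n₁ M₁
    rwa [h₁.2] at this
  · have := zero_mem_Dq n₂ M₂
    rwa [h₂.2] at this

end Aux

/-- The quantum indel distance is a metric on finite-qudit density matrices:
nonnegative, zero iff equal, symmetric, and satisfying the triangle inequality. -/
theorem qdist_is_metric {l : ℕ} :
    (∀ ρ₁ ρ₂ : QState l, IsDensityS ρ₁ → IsDensityS ρ₂ → 0 ≤ qdist ρ₁ ρ₂) ∧
    (∀ ρ₁ ρ₂ : QState l, IsDensityS ρ₁ → IsDensityS ρ₂ →
      (qdist ρ₁ ρ₂ = 0 ↔ ρ₁ = ρ₂)) ∧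
    (∀ ρ₁ ρ₂ : QState l, IsDensityS ρ₁ → IsDensityS ρ₂ →
      qdist ρ₁ ρ₂ = qdist ρ₂ ρ₁) ∧
    (∀ ρ₁ ρ₂ ρ₃ : QState l, IsDensityS ρ₁ → IsDensityS ρ₂ → IsDensityS ρ₃ →
      qdist ρ₁ ρ₃ ≤ qdist ρ₁ ρ₂ + qdist ρ₂ ρ₃) := by
  refine ⟨fun _ _ _ _ => Nat.zero_le _, ?_, ?_, ?_⟩
  · -- zero iff equal
    intro ρ₁ ρ₂ h₁ h₂
    constructor
    · intro h
      have hmem := Nat.sInf_mem (qdist_set_nonempty h₁ h₂)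
      rw [show sInf { k | ∃ s t : ℕ, s + t = k ∧ (Dq s {ρ₁} ∩ Dq t {ρ₂}).Nonempty }
          = qdist ρ₁ ρ₂ from rfl, h] at hmem
      obtain ⟨s, t, hst, μ, hμ₁, hμ₂⟩ := hmem
      obtain ⟨rfl, rfl⟩ : s = 0 ∧ t = 0 := by omega
      simp only [Dq, Set.mem_singleton_iff] at hμ₁ hμ₂
      rw [← hμ₁, ← hμ₂]
    · rintro rfl
      have : qdist ρ₁ ρ₁ ≤ 0 :=
        Nat.sInf_le ⟨0, 0, rfl, ⟨ρ₁, rfl, rfl⟩⟩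
      omega
  · -- symmetry
    intro ρ₁ ρ₂ _ _
    unfold qdist
    congr 1
    ext k
    constructor
    · rintro ⟨s, t, hst, μ, hμ₁, hμ₂⟩
      exact ⟨t, s, by omega, μ, hμ₂, hμ₁⟩
    · rintro ⟨s, t, hst, μ, hμ₁, hμ₂⟩
      exact ⟨t, s, by omega, μ, hμ₂, hμ₁⟩
  · -- triangle
    intro ρ₁ ρ₂ ρ₃ h₁ h₂ h₃
    obtain ⟨s₁, t₁, h12, σ, hσ₁, hσ₂⟩ := Nat.sInf_mem (qdist_set_nonempty h₁ h₂)
    obtain ⟨s₂, t₂, h23, τ, hτ₂, hτ₃⟩ := Nat.sInf_mem (qdist_set_nonempty h₂ h₃)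
    obtain ⟨μ, t', s', ht', hs', hμσ, hμτ⟩ := confluence t₁ hσ₂ s₂ τ hτ₂
    have hm1 : μ ∈ Dq (t' + s₁) {ρ₁} := mem_Dq_trans t' hσ₁ hμσ
    have hm3 : μ ∈ Dq (s' + t₂) {ρ₃} := mem_Dq_trans s' hτ₃ hμτ
    have hle : qdist ρ₁ ρ₃ ≤ (t' + s₁) + (s' + t₂) :=
      Nat.sInf_le ⟨t' + s₁, s' + t₂, rfl, μ, hm1, hm3⟩
    have e12 : qdist ρ₁ ρ₂ = s₁ + t₁ := h12.symm
    have e23 : qdist ρ₂ ρ₃ = s₂ + t₂ := h23.symm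
    omega
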